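/- arXiv:2512.09102 — 4 statements merged into one kernel-verified Lean document; each statement's English description precedes it below -/
import Mathlib

section
/- Let F be a field of characteristic zero, let V be a nonzero finite-dimensional F-vector space, and let α be a nonzero element of F. Then there do not exist an F-linear endomorphism D of V and an invertible F-linear endomorphism E of V such that D ∘ E - E ∘ D = α • E. -/
/-- Over a field of characteristic zero, on a nonzero
finite-dimensional vector space there is no endomorphism `D` and invertible
endomorphism `E` with `D ∘ E - E ∘ D = α • E` for a nonzero scalar `α`. -/
theorem no_finite_dimensional_exponential_relation
    (F : Type*) [Field F] [CharZero F]
    (V : Type*) [AddCommGroup V] [Module F V]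
    [FiniteDimensional F V] [Nontrivial V]
    (α : F) (hα : α ≠ 0) :
    ¬ ∃ (D : Module.End F V) (E : (Module.End F V)ˣ),
        D * (E : Module.End F V) - (E : Module.End F V) * D
          = α • (E : Module.End F V) := by
  rintro ⟨D, E, h⟩
  have h1 : D * (E : Module.End F V) = (E : Module.End F V) * D + α • (E : Module.End F V) := by
    linear_combination (norm := module) h
  have h2 : ((E⁻¹ : (Module.End F V)ˣ) : Module.End F V) * (D * (E : Module.End F V))
      = D + α • (1 : Module.End F V) := by
    rw [h1, mul_add]
    congr 1
    · rw [← mul_assoc, ← Units.val_mul, inv_mul_cancel, Units.val_one, one_mul]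
    · rw [mul_smul_comm, ← Units.val_mul, inv_mul_cancel, Units.val_one]
  have htr := congrArg (LinearMap.trace F V) h2
  rw [LinearMap.trace_mul_comm, mul_assoc, ← Units.val_mul, mul_inv_cancel, Units.val_one,
    mul_one, map_add, map_smul, LinearMap.trace_one, left_eq_add, smul_eq_mul] at htr
  have : (Module.finrank F V : F) ≠ 0 := by
    exact_mod_cast Nat.cast_ne_zero.mpr Module.finrank_pos.ne'
  exact this ((mul_eq_zero.mp htr).resolve_left hα)
end

section
/- Let K/F be a finite Galois extension of fields and let V be an F-vector space. Let each element σ of the Galois group Gal(K/F) act on the tensor product K ⊗[F] V by the F-linear map σ ⊗ id. Then an element z of K ⊗[F] V is fixed by all σ ∈ Gal(K/F) if and only if z lies in the range of the F-linear map V → K ⊗[F] V sending v to 1 ⊗ v. -/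
open TensorProduct

lemma fixed_mem_bot (F K : Type*) [Field F] [Field K] [Algebra F K]
    [FiniteDimensional F K] [IsGalois F K] (x : K)
    (h : ∀ σ : K ≃ₐ[F] K, σ x = x) : ∃ d : F, algebraMap F K d = x := by
  have hb : x ∈ (⊥ : IntermediateField F K) := by
    rw [← IsGalois.fixedField_fixingSubgroup (⊥ : IntermediateField F K)]
    intro σ
    exact h σ
  rwa [IntermediateField.mem_bot, Set.mem_range] at hb

/-- Galois descent for vector spaces.  For a finite Galois
extension `K/F` and an `F`-vector space `V`, an element of `K ⊗[F] V` is fixed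
by `σ ⊗ id` for every `σ ∈ Gal(K/F)` iff it lies in the range of
`v ↦ 1 ⊗ v`. -/
theorem galois_descent_vector_space
    (F K : Type*) [Field F] [Field K] [Algebra F K]
    [FiniteDimensional F K] [IsGalois F K]
    (V : Type*) [AddCommGroup V] [Module F V]
    (z : K ⊗[F] V) :
    (∀ σ : K ≃ₐ[F] K, LinearMap.rTensor V (σ.toLinearMap) z = z) ↔
      z ∈ LinearMap.range (TensorProduct.mk F K V 1) := by
  classical
  let b := Module.Basis.ofVectorSpace F V
  set B := b.baseChange K with hB
  constructor
  · intro hfix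
    -- the coordinates commute with the Galois action
    have key : ∀ (σ : K ≃ₐ[F] K) (w : K ⊗[F] V) (i : Module.Basis.ofVectorSpaceIndex F V),
        B.repr (LinearMap.rTensor V σ.toLinearMap w) i = σ (B.repr w i) := by
      intro σ w i
      induction w using TensorProduct.induction_on with
      | zero => simp
      | tmul x y =>
        simp only [LinearMap.rTensor_tmul, AlgEquiv.toLinearMap_apply, hB,
          Module.Basis.baseChange_repr_tmul]
        rw [Algebra.smul_def, Algebra.smul_def, map_mul, AlgEquiv.commutes]
      | add u v hu hv =>
        simp only [map_add, Finsupp.add_apply, hu, hv]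
    have hcoord : ∀ i : Module.Basis.ofVectorSpaceIndex F V, ∃ d : F, algebraMap F K d = B.repr z i := by
      intro i
      refine fixed_mem_bot F K _ (fun σ => ?_)
      conv_rhs => rw [← hfix σ]
      exact (key σ z i).symm
    choose d hd using hcoord
    refine ⟨(B.repr z).support.sum (fun i => d i • b i), ?_⟩
    have := B.linearCombination_repr z
    rw [Finsupp.linearCombination_apply, Finsupp.sum] at this
    calc (TensorProduct.mk F K V 1) ((B.repr z).support.sum fun i => d i • b i)
        = (B.repr z).support.sum (fun i => (1 : K) ⊗ₜ[F] (d i • b i)) := by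
          simp [TensorProduct.mk_apply, tmul_sum]
      _ = (B.repr z).support.sum (fun i => B.repr z i • B i) := by
          refine Finset.sum_congr rfl (fun i _ => ?_)
          rw [hB, Module.Basis.baseChange_apply, ← hd i, algebraMap_smul, smul_tmul',
            smul_tmul]
      _ = z := this
  · rintro ⟨v, rfl⟩ σ
    simp [TensorProduct.mk_apply]
end

section
/- Let K/F be a finite Galois extension of fields and let B be a commutative F-algebra. Let each element σ of the Galois group Gal(K/F) act on the K-algebra K ⊗[F] B by the algebra automorphism σ ⊗ id. Then the fixed-point subalgebra {z ∈ K ⊗[F] B : (σ ⊗ id)(z) = z for all σ ∈ Gal(K/F)} is exactly the range of the canonical F-algebra homomorphism B → K ⊗[F] B sending b to 1 ⊗ b; moreover this homomorphism is injective, so the fixed-point subalgebra is isomorphic as an F-algebra to B. -/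
open TensorProduct

lemma repr_map_comm
    (F K : Type*) [Field F] [Field K] [Algebra F K]
    (B : Type*) [CommRing B] [Algebra F B]
    (ℬ : Module.Basis (Module.Basis.ofVectorSpaceIndex F B) F B)
    (σ : K ≃ₐ[F] K) (z : K ⊗[F] B) (i) :
    (ℬ.baseChange K).repr (Algebra.TensorProduct.map (σ.toAlgHom) (AlgHom.id F B) z) i
      = σ ((ℬ.baseChange K).repr z i) := by
  induction z using TensorProduct.induction_on with
  | zero => simp
  | tmul x b =>
      simp [Module.Basis.baseChange_repr_tmul, Algebra.TensorProduct.map_tmul, map_smul]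
  | add x y hx hy => simp only [map_add, Finsupp.add_apply, hx, hy]

lemma repr_one_tmul
    (F K : Type*) [Field F] [Field K] [Algebra F K]
    (B : Type*) [CommRing B] [Algebra F B]
    (ℬ : Module.Basis (Module.Basis.ofVectorSpaceIndex F B) F B) (b : B) (i) :
    (ℬ.baseChange K).repr ((1 : K) ⊗ₜ[F] b) i = algebraMap F K (ℬ.repr b i) := by
  simp [Module.Basis.baseChange_repr_tmul, Algebra.algebraMap_eq_smul_one]

/-- Galois descent for commutative algebras.  For a finite Galois
extension `K/F` and a commutative `F`-algebra `B`, the fixed points of the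
`Gal(K/F)`-action `σ ⊗ id` on `K ⊗[F] B` are exactly the range of the
canonical map `b ↦ 1 ⊗ b`, and this map is injective, so the fixed-point
subalgebra is isomorphic to `B`. -/
theorem galois_descent_algebra
    (F K : Type*) [Field F] [Field K] [Algebra F K]
    [FiniteDimensional F K] [IsGalois F K]
    (B : Type*) [CommRing B] [Algebra F B] :
    (∀ z : K ⊗[F] B,
        (∀ σ : K ≃ₐ[F] K,
            Algebra.TensorProduct.map (σ.toAlgHom) (AlgHom.id F B) z = z) ↔
          z ∈ (Algebra.TensorProduct.includeRight : B →ₐ[F] K ⊗[F] B).range) ∧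
      Function.Injective
        (Algebra.TensorProduct.includeRight : B →ₐ[F] K ⊗[F] B) := by
  classical
  let ℬ : Module.Basis (Module.Basis.ofVectorSpaceIndex F B) F B := Module.Basis.ofVectorSpace F B
  have hbot : IntermediateField.fixedField (⊤ : Subgroup (K ≃ₐ[F] K)) = ⊥ :=
    ((IsGalois.tfae (F := F) (E := K)).out 0 1).mp (inferInstance : IsGalois F K)
  have hinj := (algebraMap F K).injective
  constructor
  · intro z
    constructor
    · intro hfix
      have hcoord : ∀ i, ∃ c : F,
          algebraMap F K c = (ℬ.baseChange K).repr z i := by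
        intro i
        have hmem : (ℬ.baseChange K).repr z i ∈
            IntermediateField.fixedField (⊤ : Subgroup (K ≃ₐ[F] K)) := by
          intro σ
          have h := repr_map_comm F K B ℬ σ.1 z i
          rw [hfix σ.1] at h
          exact h.symm
        rw [hbot] at hmem
        exact (IntermediateField.mem_bot).mp hmem
      choose c hc using hcoord
      have hsupp : ∀ i, c i ≠ 0 → i ∈ ((ℬ.baseChange K).repr z).support := by
        intro i hi
        rw [Finsupp.mem_support_iff]
        intro h0
        exact hi (hinj (by rw [hc i, h0, map_zero]))
      set g : (Module.Basis.ofVectorSpaceIndex F B) →₀ F :=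
        Finsupp.onFinset ((ℬ.baseChange K).repr z).support c hsupp with hg
      refine ⟨ℬ.repr.symm g, ?_⟩
      apply (ℬ.baseChange K).repr.injective
      refine Finsupp.ext fun i => ?_
      show ((ℬ.baseChange K).repr ((1 : K) ⊗ₜ[F] (ℬ.repr.symm g))) i = _
      rw [repr_one_tmul, LinearEquiv.apply_symm_apply]
      exact hc i
    · rintro ⟨b, rfl⟩ σ
      simp
  · intro x y hxy
    apply ℬ.repr.injective
    refine Finsupp.ext fun i => ?_
    apply hinj
    rw [← repr_one_tmul F K B ℬ x i, ← repr_one_tmul F K B ℬ y i]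
    simp only [Algebra.TensorProduct.includeRight_apply] at hxy
    rw [hxy]
end

section
/- Let F be a field and m a natural number. Every F-algebra automorphism φ of the Laurent polynomial ring AddMonoidAlgebra F (Fin m → ℤ) is a monomial automorphism: there exist an additive group automorphism σ of (Fin m → ℤ) and a group homomorphism χ : (Fin m → ℤ) →+ Additive Fˣ such that for every exponent vector a ∈ (Fin m → ℤ) and every c ∈ F, φ(single a c) = single (σ a) (χ(a) · c), where χ(a) is viewed as an element of F. -/
open AddMonoidAlgebra Finsupp

/-- In a group algebra over a linearly ordered abelian group, the coefficient of a
product at the sum of the top degrees is the product of the leading coefficients. -/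
lemma aux_mul_apply_max {F : Type*} [Field F] {G : Type*} [AddCommGroup G] [LinearOrder G] [IsOrderedAddMonoid G]
    (x y : AddMonoidAlgebra F G) (hxs : x.coeff.support.Nonempty) (hys : y.coeff.support.Nonempty) :
    (x * y).coeff (x.coeff.support.max' hxs + y.coeff.support.max' hys)
      = x.coeff (x.coeff.support.max' hxs) * y.coeff (y.coeff.support.max' hys) := by
  classical
  set Mx := x.coeff.support.max' hxs with hMx
  set My := y.coeff.support.max' hys with hMy
  rw [AddMonoidAlgebra.mul_apply]
  rw [Finsupp.sum]
  have h1 : ∀ a ∈ x.coeff.support, a ≠ Mx →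
      (Finsupp.sum y.coeff fun a₂ b₂ => if a + a₂ = Mx + My then x.coeff a * b₂ else 0) = 0 := by
    intro a ha hne
    rw [Finsupp.sum]
    apply Finset.sum_eq_zero
    intro b hb
    rw [if_neg]
    intro hab
    have h2 : a < Mx := lt_of_le_of_ne (x.coeff.support.le_max' a ha) hne
    have h3 : b ≤ My := y.coeff.support.le_max' b hb
    exact absurd hab (add_lt_add_of_lt_of_le h2 h3).ne
  rw [Finset.sum_eq_single_of_mem Mx (x.coeff.support.max'_mem hxs) h1]
  rw [Finsupp.sum]
  have h4 : ∀ b ∈ y.coeff.support, b ≠ My → (if Mx + b = Mx + My then x.coeff Mx * y.coeff b else 0) = 0 := by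
    intro b hb hne
    rw [if_neg]
    intro hab
    exact hne (add_left_cancel hab)
  rw [Finset.sum_eq_single_of_mem My (y.coeff.support.max'_mem hys) h4, if_pos rfl]

/-- Same at the bottom degrees. -/
lemma aux_mul_apply_min {F : Type*} [Field F] {G : Type*} [AddCommGroup G] [LinearOrder G] [IsOrderedAddMonoid G]
    (x y : AddMonoidAlgebra F G) (hxs : x.coeff.support.Nonempty) (hys : y.coeff.support.Nonempty) :
    (x * y).coeff (x.coeff.support.min' hxs + y.coeff.support.min' hys)
      = x.coeff (x.coeff.support.min' hxs) * y.coeff (y.coeff.support.min' hys) := by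
  classical
  set Mx := x.coeff.support.min' hxs with hMx
  set My := y.coeff.support.min' hys with hMy
  rw [AddMonoidAlgebra.mul_apply]
  rw [Finsupp.sum]
  have h1 : ∀ a ∈ x.coeff.support, a ≠ Mx →
      (Finsupp.sum y.coeff fun a₂ b₂ => if a + a₂ = Mx + My then x.coeff a * b₂ else 0) = 0 := by
    intro a ha hne
    rw [Finsupp.sum]
    apply Finset.sum_eq_zero
    intro b hb
    rw [if_neg]
    intro hab
    have h2 : Mx < a := lt_of_le_of_ne (x.coeff.support.min'_le a ha) (Ne.symm hne)
    have h3 : My ≤ b := y.coeff.support.min'_le b hb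
    exact absurd hab (add_lt_add_of_lt_of_le h2 h3).ne'
  rw [Finset.sum_eq_single_of_mem Mx (x.coeff.support.min'_mem hxs) h1]
  rw [Finsupp.sum]
  have h4 : ∀ b ∈ y.coeff.support, b ≠ My → (if Mx + b = Mx + My then x.coeff Mx * y.coeff b else 0) = 0 := by
    intro b hb hne
    rw [if_neg]
    intro hab
    exact hne (add_left_cancel hab)
  rw [Finset.sum_eq_single_of_mem My (y.coeff.support.min'_mem hys) h4, if_pos rfl]

/-- Units in a group algebra of a linearly ordered abelian group over a field are
monomials. -/
lemma aux_unit_is_single {F : Type*} [Field F] {G : Type*} [AddCommGroup G] [LinearOrder G] [IsOrderedAddMonoid G]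
    {x y : AddMonoidAlgebra F G} (h : x * y = 1) :
    ∃ a c, c ≠ 0 ∧ x = AddMonoidAlgebra.single a c := by
  classical
  have hx : x ≠ 0 := by rintro rfl; rw [zero_mul] at h; exact one_ne_zero h.symm
  have hy : y ≠ 0 := by rintro rfl; rw [mul_zero] at h; exact one_ne_zero h.symm
  have hxs : x.coeff.support.Nonempty := Finsupp.support_nonempty_iff.mpr (AddMonoidAlgebra.coeff_eq_zero.not.mpr hx)
  have hys : y.coeff.support.Nonempty := Finsupp.support_nonempty_iff.mpr (AddMonoidAlgebra.coeff_eq_zero.not.mpr hy)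
  set Mx := x.coeff.support.max' hxs with hMx
  set My := y.coeff.support.max' hys with hMy
  set mx := x.coeff.support.min' hxs with hmx
  set my := y.coeff.support.min' hys with hmy
  have hone : ∀ z : G, z ≠ 0 → (1 : AddMonoidAlgebra F G).coeff z = 0 := by
    intro z hz
    rw [AddMonoidAlgebra.one_def]
    exact Finsupp.single_eq_of_ne' (Ne.symm hz)
  have hne1 : x.coeff Mx * y.coeff My ≠ 0 :=
    mul_ne_zero (Finsupp.mem_support_iff.mp (x.coeff.support.max'_mem hxs))
      (Finsupp.mem_support_iff.mp (y.coeff.support.max'_mem hys))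
  have hne2 : x.coeff mx * y.coeff my ≠ 0 :=
    mul_ne_zero (Finsupp.mem_support_iff.mp (x.coeff.support.min'_mem hxs))
      (Finsupp.mem_support_iff.mp (y.coeff.support.min'_mem hys))
  have hM : Mx + My = 0 := by
    by_contra hne
    have := aux_mul_apply_max x y hxs hys
    rw [h, hone _ hne] at this
    exact hne1 this.symm
  have hm : mx + my = 0 := by
    by_contra hne
    have := aux_mul_apply_min x y hxs hys
    rw [h, hone _ hne] at this
    exact hne2 this.symm
  have hle1 : mx ≤ Mx := x.coeff.support.min'_le _ (x.coeff.support.max'_mem hxs)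
  have hle2 : my ≤ My := y.coeff.support.min'_le _ (y.coeff.support.max'_mem hys)
  have heq : mx = Mx := by
    have h5 : Mx + My ≤ Mx + my := by
      rw [hM, ← hm]; exact add_le_add_left hle1 my
    have h6 : My = my := le_antisymm (le_of_add_le_add_left h5) hle2
    have h7 : mx + my = Mx + my := by rw [hm, ← hM, h6]
    exact add_right_cancel h7
  have hsupp : x.coeff.support = {Mx} := by
    apply Finset.eq_singleton_iff_nonempty_unique_mem.mpr
    refine ⟨hxs, fun a ha => ?_⟩
    exact le_antisymm (x.coeff.support.le_max' a ha) (heq ▸ x.coeff.support.min'_le a ha)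
  obtain ⟨hne, hx'⟩ := Finsupp.support_eq_singleton.mp hsupp
  exact ⟨Mx, x.coeff Mx, hne, AddMonoidAlgebra.coeff_injective hx'⟩

noncomputable instance lexPiIntInstance (m : ℕ) :
    IsOrderedAddMonoid (Lex (Fin m → ℤ)) := by
  haveI : WellFoundedLT (Fin m) := inferInstance
  infer_instance

/-- Every `F`-algebra automorphism of the Laurent polynomial ring
`AddMonoidAlgebra F (Fin m → ℤ)` is a monomial automorphism: there are a
lattice automorphism `σ` of `ℤ^m` and a character `χ : ℤ^m →+ Additive Fˣ`
with `φ (single a c) = single (σ a) (χ(a) • c)` for all `a`, `c`. -/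
theorem laurent_automorphism_is_monomial
    (F : Type*) [Field F] (m : ℕ)
    (φ : AddMonoidAlgebra F (Fin m → ℤ) ≃ₐ[F] AddMonoidAlgebra F (Fin m → ℤ)) :
    ∃ (σ : (Fin m → ℤ) ≃+ (Fin m → ℤ)) (χ : (Fin m → ℤ) →+ Additive Fˣ),
      ∀ (a : Fin m → ℤ) (c : F),
        φ (AddMonoidAlgebra.single a c) =
          AddMonoidAlgebra.single (σ a) (((Additive.toMul (χ a) : Fˣ) : F) * c) := by
  classical
  set G := Fin m → ℤ with hG
  -- monomials are units, so their images are monomials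
  have keymap : ∀ (ψ : AddMonoidAlgebra F G ≃ₐ[F] AddMonoidAlgebra F G) (a : G),
      ∃ b c, c ≠ 0 ∧ ψ (AddMonoidAlgebra.single a 1) = AddMonoidAlgebra.single b c := by
    intro ψ a
    have hu : ψ (AddMonoidAlgebra.single a 1) * ψ (AddMonoidAlgebra.single (-a) 1) = 1 := by
      rw [← map_mul, AddMonoidAlgebra.single_mul_single, add_neg_cancel, mul_one,
        ← AddMonoidAlgebra.one_def, map_one]
    have hu' : (ψ (AddMonoidAlgebra.single a 1) : AddMonoidAlgebra F (Lex G))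
        * (ψ (AddMonoidAlgebra.single (-a) 1) : AddMonoidAlgebra F (Lex G)) = 1 := hu
    obtain ⟨b, c, hc, he⟩ := aux_unit_is_single (F := F) (G := Lex G) hu'
    exact ⟨ofLex b, c, hc, he⟩
  choose σ0 c0 hc0 hP using keymap φ
  choose τ0 d0 hd0 hQ using keymap φ.symm
  -- uniqueness of monomial representation
  have uniq : ∀ (b b' : G) (c c' : F), c ≠ 0 →
      AddMonoidAlgebra.single b c = AddMonoidAlgebra.single b' c' → b = b' ∧ c = c' := by
    intro b b' c c' hc he
    rcases AddMonoidAlgebra.single_inj.mp he with ⟨h1, h2⟩ | ⟨h1, h2⟩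
    · exact ⟨h1, h2⟩
    · exact absurd h1 hc
  -- the algebra map is `single 0`
  have halg : ∀ (ψ : AddMonoidAlgebra F G ≃ₐ[F] AddMonoidAlgebra F G) (c : F),
      ψ (AddMonoidAlgebra.single 0 c) = AddMonoidAlgebra.single 0 c := by
    intro ψ c
    have h0 : (AddMonoidAlgebra.single (0 : G) c : AddMonoidAlgebra F G)
        = algebraMap F (AddMonoidAlgebra F G) c := by
      rw [AddMonoidAlgebra.coe_algebraMap]; rfl
    rw [h0, AlgEquiv.commutes]
  -- general image of a monomial
  have himg : ∀ (ψ : AddMonoidAlgebra F G ≃ₐ[F] AddMonoidAlgebra F G)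
      (s : G → G) (e : G → F)
      (hPs : ∀ a, ψ (AddMonoidAlgebra.single a 1) = AddMonoidAlgebra.single (s a) (e a))
      (a : G) (c : F),
      ψ (AddMonoidAlgebra.single a c) = AddMonoidAlgebra.single (s a) (e a * c) := by
    intro ψ s e hPs a c
    have h1 : (AddMonoidAlgebra.single a c : AddMonoidAlgebra F G)
        = AddMonoidAlgebra.single a 1 * AddMonoidAlgebra.single (0 : G) c := by
      rw [AddMonoidAlgebra.single_mul_single, add_zero, one_mul]
    rw [h1, map_mul, hPs, halg ψ c, AddMonoidAlgebra.single_mul_single, add_zero]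
  -- additivity
  have hadd : ∀ a b : G, σ0 (a + b) = σ0 a + σ0 b ∧ c0 (a + b) = c0 a * c0 b := by
    intro a b
    have h1 : φ (AddMonoidAlgebra.single (a + b) (1 : F))
        = AddMonoidAlgebra.single (σ0 a + σ0 b) (c0 a * c0 b) := by
      have h2 : (AddMonoidAlgebra.single (a + b) (1 : F) : AddMonoidAlgebra F G)
          = AddMonoidAlgebra.single a 1 * AddMonoidAlgebra.single b 1 := by
        rw [AddMonoidAlgebra.single_mul_single, one_mul]
      rw [h2, map_mul, hP, hP, AddMonoidAlgebra.single_mul_single]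
    rw [hP (a + b)] at h1
    exact uniq _ _ _ _ (hc0 _) h1
  -- zero
  have hzero : σ0 0 = 0 ∧ c0 0 = 1 := by
    have h1 : φ (AddMonoidAlgebra.single (0 : G) (1 : F))
        = AddMonoidAlgebra.single (0 : G) (1 : F) := by
      rw [← AddMonoidAlgebra.one_def, map_one]
    rw [hP 0] at h1
    exact uniq _ _ _ _ (hc0 _) h1
  -- left inverse
  have hleft : ∀ a : G, τ0 (σ0 a) = a := by
    intro a
    have h1 : φ.symm (AddMonoidAlgebra.single (σ0 a) (c0 a))
        = AddMonoidAlgebra.single a (1 : F) := by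
      rw [← hP a, AlgEquiv.symm_apply_apply]
    rw [himg φ.symm τ0 d0 hQ (σ0 a) (c0 a)] at h1
    exact (uniq _ _ _ _ (mul_ne_zero (hd0 _) (hc0 _)) h1).1
  -- right inverse
  have hright : ∀ b : G, σ0 (τ0 b) = b := by
    intro b
    have h1 : φ (AddMonoidAlgebra.single (τ0 b) (d0 b))
        = AddMonoidAlgebra.single b (1 : F) := by
      rw [← hQ b, AlgEquiv.apply_symm_apply]
    rw [himg φ σ0 c0 hP (τ0 b) (d0 b)] at h1
    exact (uniq _ _ _ _ (mul_ne_zero (hc0 _) (hd0 _)) h1).1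
  refine ⟨{ toFun := σ0, invFun := τ0, left_inv := hleft, right_inv := hright,
            map_add' := fun a b => (hadd a b).1 },
         AddMonoidHom.mk' (fun a => Additive.ofMul (Units.mk0 (c0 a) (hc0 a)))
           (fun a b => by
             apply Additive.toMul.injective
             apply Units.ext
             exact (hadd a b).2), ?_⟩
  intro a c
  exact himg φ σ0 c0 hP a c
end
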